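/- In a complete structured DNNF, for any var-gate or ×-gate g and any assignment S ∈ S(g), the box of g (the set of gates mapped by the structuring function to the same v-tree node as g) is the unique least common ancestor in the v-tree of the boxes containing the var-gates whose variables occur in S. -/
import Mathlib


/-- Positions in binary trees (paths from the root; `false` = left, `true` = right). -/
abbrev BPos := List Bool

inductive GateType where
  | top | bot | var | times | cup
deriving DecidableEq

/-- A set circuit: a DAG of gates typed ⊤, ⊥, var, ×, ∪.  `wire g' g` means `g'` is an
input of `g`. -/
structure SetCircuit (V G : Type) where
  gtype : G → GateType
  wire : G → G → Prop
  varLabel : G → Set V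
  varLabel_inj : ∀ g g', gtype g = GateType.var → gtype g' = GateType.var →
      varLabel g = varLabel g' → g = g'
  source_no_input : ∀ g, (gtype g = GateType.top ∨ gtype g = GateType.bot ∨
      gtype g = GateType.var) → ∀ g', ¬ wire g' g
  const_no_output : ∀ g, (gtype g = GateType.top ∨ gtype g = GateType.bot) → ∀ g', ¬ wire g g'
  times_two : ∀ g, gtype g = GateType.times → ∃ g₁ g₂, g₁ ≠ g₂ ∧ wire g₁ g ∧ wire g₂ g ∧
      ∀ g', wire g' g → g' = g₁ ∨ g' = g₂
  cup_one : ∀ g, gtype g = GateType.cup → ∃ g', wire g' g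

/-- `Captures C g S` : the set `S` of variables belongs to the set `S(g)` captured by
gate `g`, following the inductive semantics of set circuits. -/
inductive Captures {V G : Type} (C : SetCircuit V G) : G → Set V → Prop
  | var {g} : C.gtype g = GateType.var → Captures C g (C.varLabel g)
  | top {g} : C.gtype g = GateType.top → Captures C g ∅
  | times {g g₁ g₂ S₁ S₂} : C.gtype g = GateType.times → C.wire g₁ g → C.wire g₂ g →
      g₁ ≠ g₂ → Captures C g₁ S₁ → Captures C g₂ S₂ → Captures C g (S₁ ∪ S₂)
  | cup {g g' S} : C.gtype g = GateType.cup → C.wire g' g → Captures C g' S → Captures C g S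

/-- `CupPath C g' g` : there is a wire-path from `g'` to `g` all of whose gates strictly
between `g'` and `g` are ∪-gates. -/
inductive CupPath {V G : Type} (C : SetCircuit V G) : G → G → Prop
  | single {g' g} : C.wire g' g → CupPath C g' g
  | cons {g' m g} : C.wire g' m → C.gtype m = GateType.cup → CupPath C m g → CupPath C g' g

/-- A v-tree: a binary tree whose leaves are labeled by sets of variables. -/
inductive VTree (V : Type) where
  | leaf (vars : Set V)
  | node (l r : VTree V)

/-- The subtree of a v-tree at a position (if any). -/
def VTree.sub {V : Type} : VTree V → BPos → Option (VTree V)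
  | t, [] => some t
  | VTree.leaf _, _ :: _ => none
  | VTree.node l r, b :: p => VTree.sub (if b then r else l) p

/-- Variables occurring in (the leaves of) a v-tree. -/
def VTree.vars {V : Type} : VTree V → Set V
  | VTree.leaf vs => vs
  | VTree.node l r => l.vars ∪ r.vars

/-- Variables occurring below a given position of a v-tree. -/
def VTree.varsAt {V : Type} (t : VTree V) (p : BPos) : Set V :=
  match t.sub p with
  | some s => s.vars
  | none => ∅

/-- A complete structured DNNF: a set circuit together with a v-tree and a structuring
function `σ` mapping each gate to a (valid) position of the v-tree (its box). -/
structure StructuredDNNF (V G : Type) extends SetCircuit V G where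
  vtree : VTree V
  σ : G → BPos
  σ_valid : ∀ g, (vtree.sub (σ g)).isSome
  var_leaf : ∀ g, gtype g = GateType.var →
      ∃ vs, vtree.sub (σ g) = some (VTree.leaf vs) ∧ varLabel g ⊆ vs
  var_nonempty : ∀ g, gtype g = GateType.var → (varLabel g).Nonempty
  wire_struct : ∀ g' g, wire g' g →
      σ g' = σ g ∨ (gtype g' = GateType.cup ∧ ∃ b, σ g' = σ g ++ [b])
  times_children : ∀ g, gtype g = GateType.times →
      (∃ g₁, wire g₁ g ∧ σ g₁ = σ g ++ [false]) ∧ (∃ g₂, wire g₂ g ∧ σ g₂ = σ g ++ [true])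
  leaves_disjoint : ∀ p₁ p₂ vs₁ vs₂, vtree.sub p₁ = some (VTree.leaf vs₁) →
      vtree.sub p₂ = some (VTree.leaf vs₂) → p₁ ≠ p₂ → Disjoint vs₁ vs₂

/-- `IsLCA S p` : `p` is the least common ancestor (w.r.t. the prefix/ancestor order on
positions) of the set `S` of positions. -/
def IsLCA (S : Set BPos) (p : BPos) : Prop :=
  (∀ b ∈ S, p <+: b) ∧ ∀ q : BPos, (∀ b ∈ S, q <+: b) → q <+: p


namespace Stmt3Aux

theorem sub_append {V : Type} (t : VTree V) (p q : BPos) :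
    t.sub (p ++ q) = (t.sub p).bind (fun s => s.sub q) := by
  induction p generalizing t with
  | nil => simp [VTree.sub]
  | cons b p ih =>
    cases t with
    | leaf vs => simp [VTree.sub]
    | node l r => cases b <;> simp [VTree.sub, ih]

theorem varsAt_child_subset {V : Type} (t : VTree V) (p : BPos) (b : Bool) :
    t.varsAt (p ++ [b]) ⊆ t.varsAt p := by
  unfold VTree.varsAt
  rw [sub_append]
  cases h : t.sub p with
  | none => simp
  | some u =>
    cases u with
    | leaf vs => simp [VTree.sub]
    | node l r =>
      cases b
      · simpa [VTree.sub, VTree.vars] using (Set.subset_union_left : l.vars ⊆ l.vars ∪ r.vars)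
      · simpa [VTree.sub, VTree.vars] using (Set.subset_union_right : r.vars ⊆ l.vars ∪ r.vars)

theorem wire_varsAt_subset {V G : Type} (D : StructuredDNNF V G) {g' g : G}
    (hw : D.wire g' g) : D.vtree.varsAt (D.σ g') ⊆ D.vtree.varsAt (D.σ g) := by
  rcases D.wire_struct g' g hw with h | ⟨_, b, h⟩
  · rw [h]
  · rw [h]; exact varsAt_child_subset _ _ _

theorem captures_subset_varsAt {V G : Type} (D : StructuredDNNF V G) {g : G} {S : Set V}
    (h : Captures D.toSetCircuit g S) : S ⊆ D.vtree.varsAt (D.σ g) := by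
  induction h with
  | @var g hv =>
    obtain ⟨vs, hsub, hlab⟩ := D.var_leaf _ hv
    intro v hv'
    unfold VTree.varsAt
    rw [hsub]
    exact hlab hv'
  | top _ => simp
  | @times g g₁ g₂ S₁ S₂ hg hw1 hw2 hne h1 h2 ih1 ih2 =>
    intro v hv
    rcases hv with hv | hv
    · exact wire_varsAt_subset D hw1 (ih1 hv)
    · exact wire_varsAt_subset D hw2 (ih2 hv)
  | @cup g g' S hg hw h ih =>
    intro v hv
    exact wire_varsAt_subset D hw (ih hv)

theorem vars_mem_leaf {V : Type} (t : VTree V) (v : V) (h : v ∈ t.vars) :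
    ∃ q vs, t.sub q = some (VTree.leaf vs) ∧ v ∈ vs := by
  induction t with
  | leaf vs => exact ⟨[], vs, rfl, h⟩
  | node l r ihl ihr =>
    rcases h with h | h
    · obtain ⟨q, vs, hq, hv⟩ := ihl h
      exact ⟨false :: q, vs, hq, hv⟩
    · obtain ⟨q, vs, hq, hv⟩ := ihr h
      exact ⟨true :: q, vs, hq, hv⟩

/-- Upper bound: any var-gate whose label meets `S` has its box below the box of `g`. -/
theorem ub {V G : Type} (D : StructuredDNNF V G) {g : G} {S : Set V}
    (hS : Captures D.toSetCircuit g S) {g'' : G} (hvar : D.gtype g'' = GateType.var)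
    (hne : (D.varLabel g'' ∩ S).Nonempty) : D.σ g <+: D.σ g'' := by
  obtain ⟨v, hv1, hv2⟩ := hne
  have hv3 := captures_subset_varsAt D hS hv2
  obtain ⟨t, ht⟩ := Option.isSome_iff_exists.mp (D.σ_valid g)
  have hv4 : v ∈ t.vars := by
    unfold VTree.varsAt at hv3; rw [ht] at hv3; exact hv3
  obtain ⟨q, vs, hq, hv5⟩ := vars_mem_leaf t v hv4
  have hsub : D.vtree.sub (D.σ g ++ q) = some (VTree.leaf vs) := by
    rw [sub_append, ht]; exact hq
  obtain ⟨vs₂, hsub₂, hlab₂⟩ := D.var_leaf _ hvar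
  by_cases heq : D.σ g ++ q = D.σ g''
  · exact ⟨q, heq⟩
  · exact absurd (Set.disjoint_left.mp
      (D.leaves_disjoint _ _ _ _ hsub hsub₂ heq) hv5 (hlab₂ hv1)) (fun h => h)

theorem captures_nonempty {V G : Type} (D : StructuredDNNF V G) {g : G} {S : Set V}
    (h : Captures D.toSetCircuit g S) (hg : D.gtype g ≠ GateType.top) : S.Nonempty := by
  induction h with
  | @var g hv => exact D.var_nonempty g hv
  | top ht => exact absurd ht hg
  | @times g g₁ g₂ S₁ S₂ hgt hw1 hw2 hne h1 h2 ih1 ih2 =>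
    have : D.gtype g₁ ≠ GateType.top := fun h =>
      D.const_no_output g₁ (Or.inl h) g hw1
    obtain ⟨v, hv⟩ := ih1 this
    exact ⟨v, Or.inl hv⟩
  | @cup g g' S hgt hw h ih =>
    exact ih (fun h' => D.const_no_output g' (Or.inl h') g hw)

theorem mem_captures_var {V G : Type} (D : StructuredDNNF V G) {g : G} {S : Set V}
    (h : Captures D.toSetCircuit g S) {v : V} (hv : v ∈ S) :
    ∃ g'', D.gtype g'' = GateType.var ∧ v ∈ D.varLabel g'' := by
  induction h with
  | @var g hvar => exact ⟨g, hvar, hv⟩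
  | top _ => exact absurd hv (by simp)
  | @times g g₁ g₂ S₁ S₂ hgt hw1 hw2 hne h1 h2 ih1 ih2 =>
    rcases hv with hv | hv
    · exact ih1 hv
    · exact ih2 hv
  | @cup g g' S hgt hw h ih => exact ih hv

theorem prefix_antisymm {p q : BPos} (h1 : p <+: q) (h2 : q <+: p) : p = q :=
  h1.eq_of_length (le_antisymm h1.length_le h2.length_le)

/-- The lower-bound argument for ×-gates. -/
theorem lower_times {V G : Type} (D : StructuredDNNF V G) {g gl gr : G} {Sl Sr : Set V}
    (hσl : D.σ gl = D.σ g ++ [false]) (hσr : D.σ gr = D.σ g ++ [true])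
    (hwl : D.wire gl g) (hwr : D.wire gr g)
    (hl : Captures D.toSetCircuit gl Sl) (hr : Captures D.toSetCircuit gr Sr)
    (q : BPos)
    (hq : ∀ b ∈ {p | ∃ g', D.gtype g' = GateType.var ∧
        (D.varLabel g' ∩ (Sl ∪ Sr)).Nonempty ∧ p = D.σ g'}, q <+: b) :
    q <+: D.σ g := by
  have hlt : D.gtype gl ≠ GateType.top := fun h => D.const_no_output gl (Or.inl h) g hwl
  have hrt : D.gtype gr ≠ GateType.top := fun h => D.const_no_output gr (Or.inl h) g hwr
  obtain ⟨v₁, hv₁⟩ := captures_nonempty D hl hlt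
  obtain ⟨v₂, hv₂⟩ := captures_nonempty D hr hrt
  obtain ⟨gv₁, hgv₁, hvl₁⟩ := mem_captures_var D hl hv₁
  obtain ⟨gv₂, hgv₂, hvl₂⟩ := mem_captures_var D hr hv₂
  have hub₁ : D.σ gl <+: D.σ gv₁ := ub D hl hgv₁ ⟨v₁, hvl₁, hv₁⟩
  have hub₂ : D.σ gr <+: D.σ gv₂ := ub D hr hgv₂ ⟨v₂, hvl₂, hv₂⟩
  have hq₁ : q <+: D.σ gv₁ := hq _ ⟨gv₁, hgv₁, ⟨v₁, hvl₁, Or.inl hv₁⟩, rfl⟩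
  have hq₂ : q <+: D.σ gv₂ := hq _ ⟨gv₂, hgv₂, ⟨v₂, hvl₂, Or.inr hv₂⟩, rfl⟩
  rw [hσl] at hub₁
  rw [hσr] at hub₂
  have hgp₁ : D.σ g <+: D.σ gv₁ := ((D.σ g).prefix_append [false]).trans hub₁
  rcases le_total q.length (D.σ g).length with hlen | hlen
  · exact List.prefix_of_prefix_length_le hq₁ hgp₁ hlen
  · -- σ g <+: q
    obtain ⟨s, rfl⟩ := List.prefix_of_prefix_length_le hgp₁ hq₁ hlen
    obtain ⟨r₁, hr₁⟩ := hub₁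
    obtain ⟨r₂, hr₂⟩ := hub₂
    rw [← hr₁] at hq₁
    rw [← hr₂] at hq₂
    rw [List.append_assoc] at hq₁ hq₂
    have hs₁ : s <+: [false] ++ r₁ := (List.prefix_append_right_inj _).mp hq₁
    have hs₂ : s <+: [true] ++ r₂ := (List.prefix_append_right_inj _).mp hq₂
    cases s with
    | nil => simp
    | cons c s' =>
      have h1 : c = false := (List.cons_prefix_cons.mp hs₁).1
      have h2 : c = true := (List.cons_prefix_cons.mp hs₂).1
      simp [h1] at h2

end Stmt3Aux

open Stmt3Aux in

/-- for a var-gate or ×-gate `g` and any `S ∈ S(g)`, the box of `g` is the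
unique least common ancestor of the boxes of the var-gates whose variables occur
in `S`. -/
theorem stmt3 {V G : Type} (D : StructuredDNNF V G) (g : G)
    (hg : D.gtype g = GateType.var ∨ D.gtype g = GateType.times)
    (S : Set V) (hS : Captures D.toSetCircuit g S) :
    IsLCA {p | ∃ g', D.gtype g' = GateType.var ∧ (D.varLabel g' ∩ S).Nonempty ∧ p = D.σ g'}
      (D.σ g) ∧
    ∀ p : BPos,
      IsLCA {p | ∃ g', D.gtype g' = GateType.var ∧ (D.varLabel g' ∩ S).Nonempty ∧ p = D.σ g'} p →
      p = D.σ g := by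
  have hub : ∀ b ∈ {p | ∃ g', D.gtype g' = GateType.var ∧
      (D.varLabel g' ∩ S).Nonempty ∧ p = D.σ g'}, D.σ g <+: b := by
    rintro b ⟨g', hg', hne, rfl⟩
    exact ub D hS hg' hne
  have hlow : ∀ q : BPos, (∀ b ∈ {p | ∃ g', D.gtype g' = GateType.var ∧
      (D.varLabel g' ∩ S).Nonempty ∧ p = D.σ g'}, q <+: b) → q <+: D.σ g := by
    intro q hq
    rcases hg with hv | ht
    · -- var case: S = varLabel g, and σ g is itself in the set
      have hSeq : S = D.varLabel g := by
        cases hS with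
        | var _ => rfl
        | top h => rw [h] at hv; cases hv
        | times h _ _ _ _ _ => rw [h] at hv; cases hv
        | cup h _ _ => rw [h] at hv; cases hv
      refine hq _ ⟨g, hv, ?_, rfl⟩
      rw [hSeq, Set.inter_self]
      exact D.var_nonempty g hv
    · -- times case
      cases hS with
      | var h => rw [h] at ht; cases ht
      | top h => rw [h] at ht; cases ht
      | cup h _ _ => rw [h] at ht; cases ht
      | @times _ g₁ g₂ S₁ S₂ hgt hw1 hw2 hne h1 h2 =>
        obtain ⟨b₁, b₂, hb, hwb1, hwb2, huniq⟩ := D.times_two g ht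
        obtain ⟨⟨a₁, hwa₁, hσa₁⟩, ⟨a₂, hwa₂, hσa₂⟩⟩ := D.times_children g ht
        have ha : a₁ ≠ a₂ := by
          intro h; rw [h, hσa₂] at hσa₁; simp at hσa₁
        have key : (D.σ g₁ = D.σ g ++ [false] ∧ D.σ g₂ = D.σ g ++ [true]) ∨
            (D.σ g₁ = D.σ g ++ [true] ∧ D.σ g₂ = D.σ g ++ [false]) := by
          rcases huniq a₁ hwa₁ with h1 | h1 <;> rcases huniq a₂ hwa₂ with h2 | h2 <;>
            rcases huniq g₁ hw1 with h3 | h3 <;> rcases huniq g₂ hw2 with h4 | h4 <;>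
            subst h1 h2 <;> first
              | exact absurd rfl ha
              | exact absurd rfl hb
              | (subst h3; first
                  | (subst h4; first
                      | exact absurd rfl hne
                      | exact Or.inl ⟨hσa₁, hσa₂⟩
                      | exact Or.inr ⟨hσa₂, hσa₁⟩)
                  | exact absurd h4 hne.symm
                  | exact absurd h4 hne)
        rcases key with ⟨k1, k2⟩ | ⟨k1, k2⟩
        · exact lower_times D k1 k2 hw1 hw2 h1 h2 q hq
        · rw [Set.union_comm] at hq
          exact lower_times D k2 k1 hw2 hw1 h2 h1 q hq
  refine ⟨⟨hub, hlow⟩, ?_⟩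
  rintro p ⟨hp1, hp2⟩
  exact prefix_antisymm (hlow p hp1) (hp2 _ hub)
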